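/- Let α ∈ (0, π/2) and β ∈ [0, α]. Then for every θ ∈ (0,1), sin(2β)/sin(2α) − sin(2θβ)/sin(2θα) ≥ 0. -/

import Mathlib

open Real

lemma phi_hasDeriv (θ : ℝ) (t : ℝ) :
    HasDerivAt (fun t => θ * Real.cos (θ*t) * Real.sin t - Real.sin (θ*t) * Real.cos t)
      ((1 - θ^2) * (Real.sin (θ*t) * Real.sin t)) t := by
  have hlin : HasDerivAt (fun t : ℝ => θ * t) θ t := by
    simpa using (hasDerivAt_id t).const_mul θ
  have hc : HasDerivAt (fun t => Real.cos (θ*t)) (-Real.sin (θ*t) * θ) t :=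
    (Real.hasDerivAt_cos (θ*t)).comp t hlin
  have hs : HasDerivAt (fun t => Real.sin (θ*t)) (Real.cos (θ*t) * θ) t :=
    (Real.hasDerivAt_sin (θ*t)).comp t hlin
  have h1 : HasDerivAt (fun t => θ * Real.cos (θ*t) * Real.sin t)
      ((θ * (-Real.sin (θ*t) * θ)) * Real.sin t + θ * Real.cos (θ*t) * Real.cos t) t :=
    ((hc.const_mul θ).mul (Real.hasDerivAt_sin t))
  have h2 : HasDerivAt (fun t => Real.sin (θ*t) * Real.cos t)
      ((Real.cos (θ*t) * θ) * Real.cos t + Real.sin (θ*t) * (-Real.sin t)) t :=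
    hs.mul (Real.hasDerivAt_cos t)
  have := h1.sub h2
  exact this.congr_deriv (by ring)

lemma phi_nonneg {θ : ℝ} (hθ0 : 0 < θ) (hθ1 : θ < 1) {x : ℝ} (hx0 : 0 ≤ x) (hxπ : x ≤ π) :
    0 ≤ θ * Real.cos (θ*x) * Real.sin x - Real.sin (θ*x) * Real.cos x := by
  set F : ℝ → ℝ := fun t => θ * Real.cos (θ*t) * Real.sin t - Real.sin (θ*t) * Real.cos t with hF
  have hmono : MonotoneOn F (Set.Icc 0 π) := by
    apply monotoneOn_of_deriv_nonneg (convex_Icc 0 π)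
    · exact Continuous.continuousOn (by
        have : Continuous F := by
          apply Continuous.sub
          · exact ((continuous_const.mul ((Real.continuous_cos).comp
              (continuous_const.mul continuous_id))).mul Real.continuous_sin)
          · exact ((Real.continuous_sin.comp (continuous_const.mul continuous_id)).mul
              Real.continuous_cos)
        exact this)
    · intro t ht
      exact (phi_hasDeriv θ t).differentiableAt.differentiableWithinAt
    · intro t ht
      rw [interior_Icc] at ht
      rw [(phi_hasDeriv θ t).deriv]
      have h1 : 0 ≤ Real.sin t := (Real.sin_pos_of_pos_of_lt_pi ht.1 ht.2).le
      have h2 : 0 ≤ Real.sin (θ*t) := by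
        apply Real.sin_nonneg_of_nonneg_of_le_pi
        · exact mul_nonneg hθ0.le ht.1.le
        · nlinarith [ht.1.le, ht.2.le, Real.pi_pos]
      exact mul_nonneg (by nlinarith) (mul_nonneg h2 h1)
  have h0 : F 0 = 0 := by simp [hF]
  have := hmono (Set.mem_Icc.mpr ⟨le_refl 0, Real.pi_pos.le⟩) (Set.mem_Icc.mpr ⟨hx0, hxπ⟩) hx0
  rw [h0] at this
  exact this

lemma ratio_mono {θ : ℝ} (hθ0 : 0 < θ) (hθ1 : θ < 1) {x y : ℝ} (hx : 0 < x) (hxy : x ≤ y)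
    (hy : y < π) : Real.sin (θ*x) * Real.sin y ≤ Real.sin (θ*y) * Real.sin x := by
  set g : ℝ → ℝ := fun t => Real.sin (θ*t) / Real.sin t with hg
  have hsub : Set.Icc x y ⊆ Set.Ioo 0 π := fun t ht =>
    ⟨lt_of_lt_of_le hx ht.1, lt_of_le_of_lt ht.2 hy⟩
  have hsin_pos : ∀ t ∈ Set.Icc x y, 0 < Real.sin t := fun t ht =>
    Real.sin_pos_of_pos_of_lt_pi (hsub ht).1 (hsub ht).2
  have hgderiv : ∀ t ∈ Set.Icc x y, HasDerivAt g
      ((θ * Real.cos (θ*t) * Real.sin t - Real.sin (θ*t) * Real.cos t) / (Real.sin t)^2) t := by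
    intro t ht
    have hlin : HasDerivAt (fun t : ℝ => θ * t) θ t := by
      simpa using (hasDerivAt_id t).const_mul θ
    have hs : HasDerivAt (fun t => Real.sin (θ*t)) (Real.cos (θ*t) * θ) t :=
      (Real.hasDerivAt_sin (θ*t)).comp t hlin
    have := hs.div (Real.hasDerivAt_sin t) (hsin_pos t ht).ne'
    exact this.congr_deriv (by ring)
  have hmono : MonotoneOn g (Set.Icc x y) := by
    apply monotoneOn_of_deriv_nonneg (convex_Icc x y)
    · intro t ht
      exact (hgderiv t ht).continuousAt.continuousWithinAt
    · intro t ht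
      rw [interior_Icc] at ht
      exact (hgderiv t (Set.mem_Icc_of_Ioo ht)).differentiableAt.differentiableWithinAt
    · intro t ht
      rw [interior_Icc] at ht
      have ht' := Set.mem_Icc_of_Ioo ht
      rw [(hgderiv t ht').deriv]
      apply div_nonneg
      · exact phi_nonneg hθ0 hθ1 (hsub ht').1.le (hsub ht').2.le
      · positivity
  have hgxy : g x ≤ g y := hmono (Set.mem_Icc.mpr ⟨le_refl x, hxy⟩)
    (Set.mem_Icc.mpr ⟨hxy, le_refl y⟩) hxy
  have hsx := hsin_pos x (Set.mem_Icc.mpr ⟨le_refl x, hxy⟩)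
  have hsy := hsin_pos y (Set.mem_Icc.mpr ⟨hxy, le_refl y⟩)
  rw [hg] at hgxy
  simp only at hgxy
  rw [div_le_div_iff₀ hsx hsy] at hgxy
  linarith

theorem stmt_16 (α β θ : ℝ) (hα0 : 0 < α) (hα : α < π / 2)
    (hβ0 : 0 ≤ β) (hβ : β ≤ α) (hθ0 : 0 < θ) (hθ1 : θ < 1) :
    0 ≤ Real.sin (2 * β) / Real.sin (2 * α) -
        Real.sin (2 * θ * β) / Real.sin (2 * θ * α) := by
  rcases eq_or_lt_of_le hβ0 with rfl | hβpos
  · simp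
  · have h2α : 2 * α < π := by linarith
    have key : Real.sin (θ*(2*β)) * Real.sin (2*α) ≤ Real.sin (θ*(2*α)) * Real.sin (2*β) :=
      ratio_mono hθ0 hθ1 (by linarith) (by linarith) h2α
    have hsa : 0 < Real.sin (2*α) := Real.sin_pos_of_pos_of_lt_pi (by linarith) h2α
    have hsta : 0 < Real.sin (θ*(2*α)) := by
      apply Real.sin_pos_of_pos_of_lt_pi
      · positivity
      · nlinarith
    have e1 : 2 * θ * β = θ * (2 * β) := by ring
    have e2 : 2 * θ * α = θ * (2 * α) := by ring
    rw [e1, e2, sub_nonneg, div_le_div_iff₀ hsta hsa]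
    linarith
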